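/- Let G be a finite group in which the trivial subgroup attains the maximal Chermak–Delgado measure (equivalently, m_G(H) ≤ |G| for all H ≤ G). Then no nontrivial subgroup of prime-power order attains the maximal Chermak–Delgado measure. -/

import Mathlib

/-- The Chermak–Delgado measure of a subgroup. -/
noncomputable def cdMeasure {G : Type*} [Group G] (H : Subgroup G) : ℕ :=
  Nat.card H * Nat.card (Subgroup.centralizer (H : Set G))

namespace CDAux

open Subgroup

variable {G : Type*} [Group G] [Finite G]

lemma cd_bot : cdMeasure (⊥ : Subgroup G) = Nat.card G := by
  have h1 : ((⊥ : Subgroup G) : Set G) = {1} := by simp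
  have h2 : Subgroup.centralizer (((⊥ : Subgroup G) : Set G)) = ⊤ := by
    rw [h1, centralizer_eq_top_iff_subset]
    exact Set.singleton_subset_iff.mpr (Subgroup.center G).one_mem
  rw [cdMeasure, Subgroup.card_bot, one_mul, h2, Subgroup.card_top]

lemma card_eq_relindex_mul_card {X K : Subgroup G} (h : X ≤ K) :
    Nat.card K = X.relIndex K * Nat.card X := by
  have h1 := Subgroup.card_mul_index (X.subgroupOf K)
  have h2 : Nat.card (X.subgroupOf K) = Nat.card X :=
    Nat.card_congr (Subgroup.subgroupOfEquivOfLe h).toEquiv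
  rw [Subgroup.relIndex, ← h1, h2, mul_comm]

lemma P1 (X Y : Subgroup G) :
    Nat.card X * Nat.card Y
      ≤ Nat.card (X ⊔ Y : Subgroup G) * Nat.card (X ⊓ Y : Subgroup G) := by
  have h1 : Nat.card Y = X.relIndex Y * Nat.card (X ⊓ Y : Subgroup G) := by
    rw [← Subgroup.inf_relIndex_right X Y]
    exact card_eq_relindex_mul_card inf_le_right
  have h2 : Nat.card (X ⊔ Y : Subgroup G) = X.relIndex (X ⊔ Y) * Nat.card X :=
    card_eq_relindex_mul_card le_sup_left
  have hne : X.relIndex (X ⊔ Y) ≠ 0 := by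
    intro h0
    have := h2
    rw [h0, zero_mul] at this
    exact (Nat.card_pos (α := (X ⊔ Y : Subgroup G))).ne' this
  have h3 : X.relIndex Y ≤ X.relIndex (X ⊔ Y) :=
    Subgroup.relIndex_le_of_le_right le_sup_right hne
  calc Nat.card X * Nat.card Y
      = Nat.card X * (X.relIndex Y * Nat.card (X ⊓ Y : Subgroup G)) := by rw [← h1]
    _ ≤ Nat.card X * (X.relIndex (X ⊔ Y) * Nat.card (X ⊓ Y : Subgroup G)) := by
        exact Nat.mul_le_mul_left _ (Nat.mul_le_mul_right _ h3)
    _ = (X.relIndex (X ⊔ Y) * Nat.card X) * Nat.card (X ⊓ Y : Subgroup G) := by ring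
    _ = Nat.card (X ⊔ Y : Subgroup G) * Nat.card (X ⊓ Y : Subgroup G) := by rw [← h2]

lemma centralizer_subgroup_le {X Y : Subgroup G} (h : X ≤ Y) :
    Subgroup.centralizer (Y : Set G) ≤ Subgroup.centralizer (X : Set G) :=
  Subgroup.centralizer_le (SetLike.coe_subset_coe.mpr h)

lemma centralizer_sup (X Y : Subgroup G) :
    Subgroup.centralizer (((X ⊔ Y : Subgroup G) : Set G))
      = Subgroup.centralizer (X : Set G) ⊓ Subgroup.centralizer (Y : Set G) := by
  apply le_antisymm
  · exact le_inf (centralizer_subgroup_le le_sup_left) (centralizer_subgroup_le le_sup_right)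
  · rw [← Subgroup.le_centralizer_iff]
    refine sup_le ?_ ?_
    · rw [Subgroup.le_centralizer_iff]; exact inf_le_left
    · rw [Subgroup.le_centralizer_iff]; exact inf_le_right

lemma P2 (X Y : Subgroup G) :
    Nat.card (Subgroup.centralizer (X : Set G)) * Nat.card (Subgroup.centralizer (Y : Set G))
      ≤ Nat.card (Subgroup.centralizer (((X ⊔ Y : Subgroup G) : Set G)))
        * Nat.card (Subgroup.centralizer (((X ⊓ Y : Subgroup G) : Set G))) := by
  set U := Subgroup.centralizer (X : Set G)
  set V := Subgroup.centralizer (Y : Set G)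
  have h1 := P1 U V
  have h2 : (U ⊔ V : Subgroup G) ≤ Subgroup.centralizer (((X ⊓ Y : Subgroup G) : Set G)) :=
    sup_le (centralizer_subgroup_le inf_le_left) (centralizer_subgroup_le inf_le_right)
  have h3 : Nat.card (U ⊓ V : Subgroup G)
      = Nat.card (Subgroup.centralizer (((X ⊔ Y : Subgroup G) : Set G))) := by
    rw [centralizer_sup]
  calc Nat.card U * Nat.card V
      ≤ Nat.card (U ⊔ V : Subgroup G) * Nat.card (U ⊓ V : Subgroup G) := h1
    _ ≤ Nat.card (Subgroup.centralizer (((X ⊓ Y : Subgroup G) : Set G)))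
        * Nat.card (U ⊓ V : Subgroup G) :=
        Nat.mul_le_mul_right _ (Subgroup.card_le_of_le h2)
    _ = Nat.card (Subgroup.centralizer (((X ⊔ Y : Subgroup G) : Set G)))
        * Nat.card (Subgroup.centralizer (((X ⊓ Y : Subgroup G) : Set G))) := by
        rw [← h3]; ring

lemma member_sup_inf (hbot : ∀ K : Subgroup G, cdMeasure K ≤ Nat.card G)
    {X Y : Subgroup G} (hX : cdMeasure X = Nat.card G) (hY : cdMeasure Y = Nat.card G) :
    cdMeasure (X ⊔ Y) = Nat.card G ∧
      Nat.card (X ⊔ Y : Subgroup G) * Nat.card (X ⊓ Y : Subgroup G)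
        = Nat.card X * Nat.card Y := by
  set N0 := Nat.card G with hN0
  set a := Nat.card (X ⊔ Y : Subgroup G)
  set b := Nat.card (X ⊓ Y : Subgroup G)
  set cJ := Nat.card (Subgroup.centralizer (((X ⊔ Y : Subgroup G) : Set G)))
  set cI := Nat.card (Subgroup.centralizer (((X ⊓ Y : Subgroup G) : Set G)))
  set cX := Nat.card X
  set cY := Nat.card Y
  set dX := Nat.card (Subgroup.centralizer (X : Set G))
  set dY := Nat.card (Subgroup.centralizer (Y : Set G))
  have hX' : cX * dX = N0 := hX
  have hY' : cY * dY = N0 := hY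
  have h1 : cX * cY ≤ a * b := P1 X Y
  have h2 : dX * dY ≤ cJ * cI := P2 X Y
  have hmJ : a * cJ ≤ N0 := hbot _
  have hmI : b * cI ≤ N0 := hbot _
  have hNN : N0 * N0 ≤ (a * cJ) * (b * cI) := by
    calc N0 * N0 = (cX * dX) * (cY * dY) := by rw [hX', hY']
      _ = (cX * cY) * (dX * dY) := by ring
      _ ≤ (a * b) * (cJ * cI) := Nat.mul_le_mul h1 h2
      _ = (a * cJ) * (b * cI) := by ring
  have hN0pos : 0 < N0 := Nat.card_pos
  have hprod : (a * cJ) * (b * cI) = N0 * N0 :=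
    le_antisymm (Nat.mul_le_mul hmJ hmI) hNN
  have hJ : a * cJ = N0 := by
    have hle : N0 ≤ a * cJ := by
      by_contra hlt
      push_neg at hlt
      have : (a * cJ) * (b * cI) < N0 * N0 :=
        Nat.mul_lt_mul_of_lt_of_le hlt hmI hN0pos
      omega
    exact le_antisymm hmJ hle
  refine ⟨hJ, ?_⟩
  -- extract a*b = cX*cY
  have hdd : 0 < cJ * cI := by
    have h3 : 0 < cJ := Nat.card_pos
    have h4 : 0 < cI := Nat.card_pos
    positivity
  have heq : (a * b) * (cJ * cI) = (cX * cY) * (dX * dY) := by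
    calc (a * b) * (cJ * cI) = (a * cJ) * (b * cI) := by ring
      _ = N0 * N0 := hprod
      _ = (cX * dX) * (cY * dY) := by rw [hX', hY']
      _ = (cX * cY) * (dX * dY) := by ring
  by_contra hne
  have hlt : cX * cY < a * b := lt_of_le_of_ne h1 (fun h => hne h.symm)
  have : (cX * cY) * (dX * dY) < (a * b) * (cJ * cI) :=
    Nat.mul_lt_mul_of_lt_of_le hlt h2 hdd
  omega

lemma card_map_equiv (φ : G ≃* G) (N : Subgroup G) :
    Nat.card (N.map φ.toMonoidHom) = Nat.card N :=
  (Nat.card_congr (N.equivMapOfInjective _ φ.injective).toEquiv).symm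

lemma centralizer_map_equiv (φ : G ≃* G) (N : Subgroup G) :
    Subgroup.centralizer ((N.map φ.toMonoidHom : Subgroup G) : Set G)
      = (Subgroup.centralizer (N : Set G)).map φ.toMonoidHom := by
  ext x
  rw [Subgroup.mem_map_equiv, Subgroup.mem_centralizer_iff, Subgroup.mem_centralizer_iff]
  constructor
  · intro hx n hn
    have h := hx (φ n) (by exact ⟨n, hn, rfl⟩)
    have := congrArg φ.symm h
    simpa [map_mul] using this
  · intro hx h hh
    obtain ⟨n, hn, rfl⟩ := hh
    have h := hx n hn
    have := congrArg φ h
    simpa [map_mul] using this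

lemma cd_map_equiv (φ : G ≃* G) (N : Subgroup G) :
    cdMeasure (N.map φ.toMonoidHom) = cdMeasure N := by
  rw [cdMeasure, cdMeasure, card_map_equiv, centralizer_map_equiv, card_map_equiv]

end CDAux

theorem no_pGroup_cd_max_of_bot_cd_max
    (G : Type*) [Group G] [Finite G]
    (hbot : ∀ K : Subgroup G, cdMeasure K ≤ cdMeasure (⊥ : Subgroup G)) :
    ∀ (p : ℕ), p.Prime → ∀ H : Subgroup G, IsPGroup p H → H ≠ ⊥ →
      ¬ (∀ K : Subgroup G, cdMeasure K ≤ cdMeasure H) := by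
  intro p hp H hH hHne hHmax
  haveI : Fact p.Prime := ⟨hp⟩
  classical
  have hb : cdMeasure (⊥ : Subgroup G) = Nat.card G := CDAux.cd_bot
  have hbot' : ∀ K : Subgroup G, cdMeasure K ≤ Nat.card G := fun K => hb ▸ hbot K
  have hHm : cdMeasure H = Nat.card G :=
    le_antisymm (hbot' H) (hb ▸ hHmax ⊥)
  -- center of G is trivial
  have hcenter : Subgroup.center G = ⊥ := by
    have h1 : cdMeasure (⊤ : Subgroup G) = Nat.card G * Nat.card (Subgroup.center G) := by
      rw [cdMeasure, Subgroup.card_top, Subgroup.coe_top, Subgroup.centralizer_univ]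
    have h2 := hbot' (⊤ : Subgroup G)
    rw [h1] at h2
    have hpos : 0 < Nat.card G := Nat.card_pos
    have : Nat.card (Subgroup.center G) = 1 := by
      have hge : 1 ≤ Nat.card (Subgroup.center G) := Nat.card_pos
      nlinarith
    exact Subgroup.eq_bot_of_card_eq _ this
  -- pick a p-subgroup member of maximal cardinality
  set s : Set (Subgroup G) := {K | IsPGroup p K ∧ cdMeasure K = Nat.card G} with hs
  have hHs : H ∈ s := ⟨hH, hHm⟩
  obtain ⟨N, hNs, hNmax⟩ :=
    Set.Finite.exists_maximalFor (fun K : Subgroup G => Nat.card K) s (Set.toFinite s) ⟨H, hHs⟩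
  obtain ⟨hNp, hNm⟩ := hNs
  -- N is nontrivial
  have hNcard : 1 < Nat.card N := by
    have hH1 : 1 < Nat.card H := (Subgroup.one_lt_card_iff_ne_bot H).mpr hHne
    rcases le_or_gt (Nat.card N) (Nat.card H) with hle | hlt
    · have : Nat.card H ≤ Nat.card N := hNmax hHs hle
      omega
    · omega
  -- N is normal
  have hNnormal : N.Normal := by
    constructor
    intro n hn g
    set φ := MulAut.conj g with hφ
    set N' := N.map (φ : G ≃* G).toMonoidHom with hN'
    have hN's : N' ∈ s := by
      refine ⟨hNp.map _, ?_⟩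
      rw [hN', CDAux.cd_map_equiv]; exact hNm
    have hsup := CDAux.member_sup_inf hbot' hNm hN's.2
    obtain ⟨hJm, hJcard⟩ := hsup
    -- N ⊔ N' is a p-group
    have hJp : IsPGroup p (N ⊔ N' : Subgroup G) := by
      obtain ⟨aN, haN⟩ := (IsPGroup.iff_card).mp hNp
      obtain ⟨aN', haN'⟩ := (IsPGroup.iff_card).mp hN's.1
      have hdvd : Nat.card (N ⊔ N' : Subgroup G) ∣ p ^ (aN + aN') := by
        exact ⟨Nat.card (N ⊓ N' : Subgroup G), by rw [pow_add, ← haN, ← haN', ← hJcard]⟩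
      obtain ⟨i, _, hi⟩ := (Nat.dvd_prime_pow hp).mp hdvd
      exact IsPGroup.of_card hi
    have hJs : (N ⊔ N' : Subgroup G) ∈ s := ⟨hJp, hJm⟩
    have hle : Nat.card N ≤ Nat.card (N ⊔ N' : Subgroup G) :=
      Subgroup.card_le_of_le le_sup_left
    have hcardeq := hNmax hJs hle
    have hNeq : N = N ⊔ N' :=
      Subgroup.eq_of_le_of_card_ge le_sup_left hcardeq
    have hN'le : N' ≤ N := hNeq ▸ le_sup_right
    have : φ n ∈ N' := ⟨n, hn, rfl⟩
    have hmem := hN'le this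
    simpa [hφ, MulAut.conj_apply] using hmem
  -- basic facts
  have hcard : Nat.card N * Nat.card (Subgroup.centralizer (N : Set G)) = Nat.card G := hNm
  set L := Subgroup.centralizer (N : Set G) with hL
  -- a Sylow p-subgroup containing N
  obtain ⟨S, hNS⟩ := hNp.exists_le_sylow
  -- L ⊔ S = ⊤
  have hLS : L ⊔ (S : Subgroup G) = ⊤ := by
    have hLidx : L.index = Nat.card N := by
      have h1 := Subgroup.card_mul_index L
      have hpos : 0 < Nat.card L := Nat.card_pos
      have : Nat.card L * L.index = Nat.card L * Nat.card N := by
        rw [h1]; rw [← hcard]; ring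
      exact Nat.eq_of_mul_eq_mul_left hpos this
    have hd1 : (L ⊔ (S : Subgroup G)).index ∣ Nat.card N := by
      rw [← hLidx]
      exact Subgroup.index_dvd_of_le le_sup_left
    have hd2 : (L ⊔ (S : Subgroup G)).index ∣ (S : Subgroup G).index :=
      Subgroup.index_dvd_of_le le_sup_right
    obtain ⟨aN, haN⟩ := (IsPGroup.iff_card).mp hNp
    rw [haN] at hd1
    obtain ⟨i, hile, hieq⟩ := (Nat.dvd_prime_pow hp).mp hd1
    have hSidx : ¬ p ∣ (S : Subgroup G).index := S.not_dvd_index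
    have hi0 : i = 0 := by
      by_contra h0
      have : p ∣ (L ⊔ (S : Subgroup G)).index := by
        rw [hieq]
        exact dvd_pow_self p h0
      exact hSidx (this.trans hd2)
    have : (L ⊔ (S : Subgroup G)).index = 1 := by rw [hieq, hi0, pow_zero]
    exact Subgroup.index_eq_one.mp this
  -- find a nontrivial element of N centralized by S
  letI : MulAction S N :=
    MulAction.compHom _ ((MulAut.conjNormal (H := N)).comp (S : Subgroup G).subtype)
  have hsmul : ∀ (x : S) (b : N), x • b = MulAut.conjNormal (G := G) (x : G) b := fun _ _ => rfl
  have hone : (1 : N) ∈ MulAction.fixedPoints S N := by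
    intro x
    rw [hsmul]
    exact map_one _
  have hpdvd : p ∣ Nat.card N := by
    obtain ⟨aN, haN⟩ := (IsPGroup.iff_card).mp hNp
    rcases Nat.eq_zero_or_pos aN with h0 | h0
    · rw [h0, pow_zero] at haN; omega
    · rw [haN]; exact dvd_pow_self p h0.ne'
  obtain ⟨b, hbfix, hbne⟩ :=
    (S.isPGroup').exists_fixed_point_of_prime_dvd_card_of_fixed_point N hpdvd hone
  -- b is central in G
  have hbcent : (b : G) ∈ Subgroup.center G := by
    have hcentb : Subgroup.centralizer ({(b : G)} : Set G) = ⊤ := by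
      rw [← top_le_iff, ← hLS]
      refine sup_le ?_ ?_
      · intro x hx
        rw [Subgroup.mem_centralizer_singleton_iff]
        have := hx (b : G) b.2
        exact this.symm
      · intro x hx
        rw [Subgroup.mem_centralizer_singleton_iff]
        have hfix := hbfix ⟨x, hx⟩
        rw [hsmul] at hfix
        have : (x : G) * (b : G) * (x : G)⁻¹ = (b : G) := by
          have := congrArg (Subtype.val) hfix
          simpa [MulAut.conjNormal_val] using this
        calc x * (b : G) = ((x * b * x⁻¹) * x : G) := by group
          _ = (b : G) * x := by rw [this]
    have := Subgroup.centralizer_eq_top_iff_subset.mp hcentb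
    exact this rfl
  rw [hcenter] at hbcent
  have : (b : G) = 1 := hbcent
  have hb1 : b = (1 : N) := by
    apply Subtype.ext
    simpa using this
  exact hbne hb1.symm
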